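/- Define the iterated RK4 map on exact data: Ŷₙ = Y(t) + f(b, h)·∑_{i=0}^{n-1} (α - Y(t + i·h)), where f(b,h) = h·b - (h²/2)·b² + (h³/6)·b³ - (h⁴/24)·b⁴ and Y is the exact solution with true parameter β₁. Then Ŷₙ = Y(t + n·h) for all n ≥ 1 if and only if f(b,h) + exp(-β₁·h) - 1 = 0, provided Y(t) ≠ α. -/
import Mathlib


theorem nstep_matching_iff (α β₁ h Y₀ t b : ℝ) (hh : h ≠ 0)
    (Y : ℝ → ℝ) (hY : ∀ s, Y s = α + (Y₀ - α) * Real.exp (-β₁ * s))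
    (hYt : Y t ≠ α)
    (f : ℝ)
    (hf : f = h * b - (h ^ 2 / 2) * b ^ 2 + (h ^ 3 / 6) * b ^ 3 - (h ^ 4 / 24) * b ^ 4)
    (Yhat : ℕ → ℝ)
    (hYhat : ∀ n, Yhat n = Y t + f * ∑ i ∈ Finset.range n, (α - Y (t + i * h))) :
    (∀ n : ℕ, 1 ≤ n → Yhat n = Y (t + n * h)) ↔
      f + Real.exp (-β₁ * h) - 1 = 0 := by
  set c := (Y₀ - α) * Real.exp (-β₁ * t) with hc
  have hcne : c ≠ 0 := by
    intro h0
    apply hYt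
    rw [hY t, ← hc, h0, add_zero]
  set r := Real.exp (-β₁ * h) with hr
  clear_value c r
  have hYi : ∀ i : ℕ, Y (t + i * h) = α + c * r ^ i := by
    intro i
    rw [hY]
    have he : Real.exp (-β₁ * (t + i * h)) = Real.exp (-β₁ * t) * r ^ i := by
      rw [hr, ← Real.exp_nat_mul, ← Real.exp_add]
      ring_nf
    rw [he, hc]; ring
  have hYt' : Y t = α + c := by rw [hY t, ← hc]
  constructor
  · intro H
    have h1 := H 1 le_rfl
    rw [hYhat, Finset.sum_range_one, hYi 0, hYi 1, hYt'] at h1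
    have : c * (f + r - 1) = 0 := by linear_combination -h1
    rcases mul_eq_zero.mp this with h' | h'
    · exact absurd h' hcne
    · exact h'
  · intro H n hn
    have hfr : f = 1 - r := by linarith
    rw [hYhat, hYi n, hYt']
    have hs : ∑ i ∈ Finset.range n, (α - Y (t + i * h))
        = -c * ∑ i ∈ Finset.range n, r ^ i := by
      rw [Finset.mul_sum]
      apply Finset.sum_congr rfl
      intro i _
      rw [hYi i]; ring
    have hg := geom_sum_mul r n
    rw [hs, hfr]
    linear_combination c * hg
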